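/- arXiv:1910.01817 — 3 statements merged into one kernel-verified Lean document; each statement's English description precedes it below -/
import Mathlib

section
/- Let R be a commutative ring and u_1, …, u_n a d-sequence in R, meaning that no u_i lies in the ideal generated by the other u_j's and ((u_1,…,u_i) : u_{i+1} u_k) = ((u_1,…,u_i) : u_k) for all 0 ≤ i and k ≥ i+1. Then for each 1 ≤ i ≤ n, ((u_1,…,u_{i-1}) : u_i) ∩ (u_1,…,u_n) = (u_1,…,u_{i-1}). -/
/-- `u 0, …, u (n-1)` is a *d-sequence* (Huneke): no `u i` lies in the ideal
generated by the other elements, and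
`((u_0,…,u_{i-1}) : u_i u_k) = ((u_0,…,u_{i-1}) : u_k)` for all `k ≥ i`. -/
def IsDSequence {R : Type*} [CommRing R] {n : ℕ} (u : Fin n → R) : Prop :=
  (∀ i : Fin n, u i ∉ Ideal.span (u '' {j | j ≠ i})) ∧
  ∀ i k : Fin n, i ≤ k →
    (Ideal.span (u '' {j | j < i})).colon (Ideal.span {u i * u k}) =
      (Ideal.span (u '' {j | j < i})).colon (Ideal.span {u k})

/-- Costa. If `u_1, …, u_n` is a d-sequence in a commutative
ring `R`, then `((u_1,…,u_{i-1}) : u_i) ∩ (u_1,…,u_n) = (u_1,…,u_{i-1})`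
for each `1 ≤ i ≤ n`. -/
theorem dsequence_colon_inter {R : Type*} [CommRing R] {n : ℕ} (u : Fin n → R)
    (hu : IsDSequence u) (i : Fin n) :
    (Ideal.span (u '' {j | j < i})).colon (Ideal.span {u i}) ⊓
        Ideal.span (Set.range u) =
      Ideal.span (u '' {j | j < i}) := by
  set J : Ideal R := Ideal.span (u '' {j | j < i}) with hJ
  apply le_antisymm
  · rintro x ⟨hx1, hx2⟩
    have hxu : x * u i ∈ J := Ideal.mem_colon_span_singleton.1 hx1
    -- key : x * u k ∈ J for all k ≥ i
    have key : ∀ k : Fin n, i ≤ k → x * u k ∈ J := by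
      intro k hk
      have h := hu.2 i k hk
      have hx' : x ∈ J.colon (Ideal.span {u i * u k}) := by
        rw [Ideal.mem_colon_span_singleton, show x * (u i * u k) = x * u i * u k by ring]
        exact Ideal.mul_mem_right _ _ hxu
      rw [h, Ideal.mem_colon_span_singleton] at hx'
      exact hx'
    have main : ∀ m : ℕ,
        x ∈ J ⊔ Ideal.span (u '' {j | i ≤ j ∧ (j : ℕ) < m}) → x ∈ J := by
      intro m
      induction m with
      | zero =>
        intro hm
        have : (u '' {j : Fin n | i ≤ j ∧ (j : ℕ) < 0}) = ∅ := by
          simp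
        rw [this, Ideal.span_empty, sup_bot_eq] at hm
        exact hm
      | succ m ih =>
        intro hm
        by_cases hmn : m < n
        · by_cases him : (i : ℕ) ≤ m
          · set k : Fin n := ⟨m, hmn⟩ with hk
            have hik : i ≤ k := him
            have hsplit : {j : Fin n | i ≤ j ∧ (j : ℕ) < m + 1} =
                {j : Fin n | i ≤ j ∧ (j : ℕ) < m} ∪ {k} := by
              ext j
              simp only [Set.mem_setOf_eq, Set.mem_union, Set.mem_singleton_iff]
              constructor
              · rintro ⟨h1, h2⟩
                rcases Nat.lt_succ_iff_lt_or_eq.1 h2 with h | h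
                · exact Or.inl ⟨h1, h⟩
                · exact Or.inr (Fin.ext h)
              · rintro (⟨h1, h2⟩ | rfl)
                · exact ⟨h1, Nat.lt_succ_of_lt h2⟩
                · exact ⟨hik, Nat.lt_succ_self m⟩
            rw [hsplit, Set.image_union, Ideal.span_union, Set.image_singleton,
              ← sup_assoc] at hm
            obtain ⟨w, hw, z, hz, hxwz⟩ := Submodule.mem_sup.1 hm
            obtain ⟨a, rfl⟩ := Ideal.mem_span_singleton'.1 hz
            set W : Ideal R := J ⊔ Ideal.span (u '' {j | i ≤ j ∧ (j : ℕ) < m})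
              with hW
            set Jk : Ideal R := Ideal.span (u '' {j | j < k}) with hJk
            have hWJk : W ≤ Jk := by
              apply sup_le
              · exact Ideal.span_mono (Set.image_mono fun j hj =>
                  lt_of_lt_of_le hj hik)
              · exact Ideal.span_mono (Set.image_mono fun j hj => hj.2)
            have hJkW : Jk ≤ W := by
              rw [hW]
              have : {j : Fin n | j < k} ⊆
                  {j : Fin n | j < i} ∪ {j : Fin n | i ≤ j ∧ (j : ℕ) < m} := by
                intro j hj
                rcases lt_or_ge j i with h | h
                · exact Or.inl h
                · exact Or.inr ⟨h, hj⟩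
              calc Jk ≤ Ideal.span (u '' ({j : Fin n | j < i} ∪
                    {j : Fin n | i ≤ j ∧ (j : ℕ) < m})) :=
                  Ideal.span_mono (Set.image_mono this)
                _ = _ := by rw [Set.image_union, Ideal.span_union]
            have hxk : x * u k ∈ Jk :=
              Ideal.span_mono (Set.image_mono fun j hj =>
                lt_of_lt_of_le hj hik) (key k hik)
            have hak : a * u k * u k ∈ Jk := by
              have : a * u k * u k = x * u k - w * u k := by
                rw [← hxwz]; ring
              rw [this]
              exact Ideal.sub_mem _ hxk (Ideal.mul_mem_right _ _ (hWJk hw))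
            have ha : a ∈ Jk.colon (Ideal.span {u k * u k}) := by
              rw [Ideal.mem_colon_span_singleton, show a * (u k * u k) = a * u k * u k
                by ring]
              exact hak
            rw [hu.2 k k le_rfl, Ideal.mem_colon_span_singleton] at ha
            apply ih
            rw [← hxwz]
            exact Submodule.add_mem _ hw (hJkW ha)
          · -- i > m : the index set is empty
            have : (u '' {j : Fin n | i ≤ j ∧ (j : ℕ) < m + 1}) = ∅ := by
              ext y
              simp only [Set.mem_image, Set.mem_setOf_eq, Set.mem_empty_iff_false,
                iff_false]
              rintro ⟨j, ⟨h1, h2⟩, -⟩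
              have : (i : ℕ) ≤ (j : ℕ) := h1
              omega
            rw [this, Ideal.span_empty, sup_bot_eq] at hm
            exact hm
        · -- m ≥ n : the index sets for m and m+1 agree
          apply ih
          have : {j : Fin n | i ≤ j ∧ (j : ℕ) < m + 1} =
              {j : Fin n | i ≤ j ∧ (j : ℕ) < m} := by
            ext j
            have := j.isLt
            simp only [Set.mem_setOf_eq]
            omega
          rwa [this] at hm
    apply main n
    have huniv : (Set.univ : Set (Fin n)) = {j : Fin n | j < i} ∪
        {j : Fin n | i ≤ j ∧ (j : ℕ) < n} := by
      ext j
      simp only [Set.mem_univ, Set.mem_union, Set.mem_setOf_eq, true_iff]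
      rcases lt_or_ge j i with h | h
      · exact Or.inl h
      · exact Or.inr ⟨h, j.isLt⟩
    rw [← Set.image_univ, huniv, Set.image_union, Ideal.span_union] at hx2
    exact hx2
  · apply le_inf
    · intro y hy
      rw [Ideal.mem_colon_span_singleton]
      exact Ideal.mul_mem_right _ _ hy
    · exact Ideal.span_mono (Set.image_subset_range u _)
end

section
/- Let G be a finite simple graph on vertex set [n] with binomial edge ideal J_G ⊆ S = K[x_1,…,x_n,y_1,…,y_n], and let H be an induced subgraph of G on vertex set V(H) with binomial edge ideal J_H ⊆ S_H = K[x_i,y_i : i ∈ V(H)]. Then for all s ≥ 1, J_H^s = J_G^s ∩ S_H. -/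
open MvPolynomial

/-- The binomial edge ideal of a simple graph `G` on vertex set `V`, inside the
polynomial ring `K[x_i, y_i : i ∈ V]` (the `x`-variables are indexed by `Sum.inl`
and the `y`-variables by `Sum.inr`). -/
noncomputable def binomialEdgeIdeal (K : Type) [Field K] {V : Type}
    (G : SimpleGraph V) : Ideal (MvPolynomial (V ⊕ V) K) :=
  Ideal.span {f | ∃ i j, G.Adj i j ∧
    f = X (Sum.inl i) * X (Sum.inr j) - X (Sum.inl j) * X (Sum.inr i)}

/-- If `H` is the induced subgraph of `G` on a vertex subset
`W`, then for all `s ≥ 1`, `J_H^s = J_G^s ∩ S_H`, where `S_H` is viewed as a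
subring of `S` via the inclusion of variables (so the intersection is the
contraction along the injective map `S_H → S`). -/
theorem binomialEdgeIdeal_pow_induced {K : Type} [Field K] {n : ℕ}
    (G : SimpleGraph (Fin n)) (W : Set (Fin n)) (s : ℕ) (hs : 1 ≤ s) :
    (binomialEdgeIdeal K (G.induce W)) ^ s =
      Ideal.comap (rename (Sum.map (Subtype.val : W → Fin n) Subtype.val) :
          MvPolynomial (↥W ⊕ ↥W) K →ₐ[K] MvPolynomial (Fin n ⊕ Fin n) K)
        ((binomialEdgeIdeal K G) ^ s) := by
  classical
  set ρ : MvPolynomial (↥W ⊕ ↥W) K →ₐ[K] MvPolynomial (Fin n ⊕ Fin n) K :=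
    rename (Sum.map (Subtype.val : W → Fin n) Subtype.val) with hρ
  -- the retraction π : S → S_H
  set g : Fin n ⊕ Fin n → MvPolynomial (↥W ⊕ ↥W) K :=
    Sum.elim (fun i => if h : i ∈ W then X (Sum.inl ⟨i, h⟩) else 0)
      (fun i => if h : i ∈ W then X (Sum.inr ⟨i, h⟩) else 0) with hg
  set π : MvPolynomial (Fin n ⊕ Fin n) K →ₐ[K] MvPolynomial (↥W ⊕ ↥W) K :=
    aeval g with hπ
  have hsec : ∀ p : MvPolynomial (↥W ⊕ ↥W) K, π (ρ p) = p := by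
    intro p
    rw [hρ, hπ]
    rw [aeval_rename]
    have : (g ∘ Sum.map (Subtype.val : W → Fin n) Subtype.val) = X := by
      funext v
      rcases v with i | i
      · simp [hg, i.2]
      · simp [hg, i.2]
    rw [this, aeval_X_left, AlgHom.coe_id, id_eq]
  -- map of the ideals under π
  have hmapπ : Ideal.map π (binomialEdgeIdeal K G)
      ≤ binomialEdgeIdeal K (G.induce W) := by
    rw [Ideal.map_le_iff_le_comap, binomialEdgeIdeal, Ideal.span_le]
    rintro f ⟨i, j, hij, rfl⟩
    simp only [Ideal.mem_comap, map_sub, map_mul, hπ, aeval_X]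
    by_cases hi : i ∈ W
    · by_cases hj : j ∈ W
      · refine Ideal.subset_span ⟨⟨i, hi⟩, ⟨j, hj⟩, hij, ?_⟩
        simp [hπ, hg, hi, hj]
      · simp [hg, dif_neg hj]
    · simp [hg, dif_neg hi]
  have hmapρ : Ideal.map ρ (binomialEdgeIdeal K (G.induce W))
      ≤ binomialEdgeIdeal K G := by
    rw [Ideal.map_le_iff_le_comap, binomialEdgeIdeal, Ideal.span_le]
    rintro f ⟨i, j, hij, rfl⟩
    refine Ideal.mem_comap.mpr (Ideal.subset_span ⟨i.val, j.val, hij, ?_⟩)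
    simp [hρ]
  apply le_antisymm
  · rw [← Ideal.map_le_iff_le_comap, Ideal.map_pow]
    exact Ideal.pow_right_mono hmapρ s
  · intro f hf
    have h1 : ρ f ∈ (binomialEdgeIdeal K G) ^ s := hf
    have h2 : π (ρ f) ∈ Ideal.map π ((binomialEdgeIdeal K G) ^ s) :=
      Ideal.mem_map_of_mem _ h1
    rw [Ideal.map_pow] at h2
    rw [hsec f] at h2
    exact Ideal.pow_right_mono hmapπ s h2
end

section
/- Let G be a non-simplicial-vertex decomposition: let G be a finite simple graph and v ∈ V(G) a vertex that is not simplicial (i.e., v lies in at least two maximal cliques). Then J_G = (J_{G∖v} + (x_v, y_v)) ∩ J_{G_v}, where G_v is the graph on V(G) with edge set E(G) ∪ {{u,w} : u,w ∈ N_G(v)}. -/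
open MvPolynomial

/-- The induced subgraph `G ∖ v`-with-isolated-vertices construction: the graph
on the same vertex set whose edges are the edges of `G` within `W`. -/
def inducedOn {V : Type} (G : SimpleGraph V) (W : Set V) : SimpleGraph V where
  Adj i j := G.Adj i j ∧ i ∈ W ∧ j ∈ W
  symm := ⟨fun i j ⟨h, hi, hj⟩ => ⟨h.symm, hj, hi⟩⟩
  loopless := ⟨fun i h => G.loopless.irrefl i h.1⟩

/-- `G_v`: the graph on `V(G)` with edge set
`E(G) ∪ {{a,b} : a, b ∈ N_G(v)}`. -/
def gvGraph {V : Type} (G : SimpleGraph V) (v : V) : SimpleGraph V where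
  Adj a b := a ≠ b ∧ (G.Adj a b ∨ (G.Adj v a ∧ G.Adj v b))
  symm := ⟨fun a b ⟨hne, h⟩ => ⟨hne.symm, by tauto⟩⟩
  loopless := ⟨fun a h => h.1 rfl⟩

noncomputable section
namespace OhtaniAux

variable {K : Type} [Field K] {V : Type} [DecidableEq V]

def fgen (i j : V) : MvPolynomial (V ⊕ V) K :=
  X (Sum.inl i) * X (Sum.inr j) - X (Sum.inl j) * X (Sum.inr i)

lemma mem_beI {G : SimpleGraph V} {i j : V} (h : G.Adj i j) :
    (fgen i j : MvPolynomial (V ⊕ V) K) ∈ binomialEdgeIdeal K G :=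
  Ideal.subset_span ⟨i, j, h, rfl⟩

lemma beI_mono {G H : SimpleGraph V} (h : ∀ i j, G.Adj i j → H.Adj i j) :
    binomialEdgeIdeal K G ≤ binomialEdgeIdeal K H := by
  apply Ideal.span_mono
  rintro f ⟨i, j, hij, rfl⟩
  exact ⟨i, j, h _ _ hij, rfl⟩

def pim (v : V) : MvPolynomial (V ⊕ V) K →ₐ[K] MvPolynomial (V ⊕ V) K :=
  aeval (fun n => if n = Sum.inl v then 0 else if n = Sum.inr v then 0 else X n)

@[simp] lemma pim_X (v : V) (n : V ⊕ V) :
    pim (K := K) v (X n) =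
      if n = Sum.inl v then 0 else if n = Sum.inr v then 0 else X n := by
  simp [pim]

lemma pim_fgen (v : V) {i j : V} (hi : i ≠ v) (hj : j ≠ v) :
    pim (K := K) v (fgen i j) = fgen i j := by
  simp [fgen, hi, hj]

variable (K) in
/-- The ideal generated by the binomials on the neighborhood of `v`. -/
def nbhdIdeal (G : SimpleGraph V) (v : V) : Ideal (MvPolynomial (V ⊕ V) K) :=
  Ideal.span {g | ∃ a b, G.Adj v a ∧ G.Adj v b ∧ g = fgen a b}

/-- Key computation: `x_v`, `y_v` times neighborhood binomials lie in `J_G`. -/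
lemma xy_mul_mem {G : SimpleGraph V} {v : V} {t : MvPolynomial (V ⊕ V) K}
    (ht : t ∈ nbhdIdeal K G v) :
    X (Sum.inl v) * t ∈ binomialEdgeIdeal K G ∧
      X (Sum.inr v) * t ∈ binomialEdgeIdeal K G := by
  induction ht using Submodule.span_induction with
  | mem g hg =>
    obtain ⟨a, b, ha, hb, rfl⟩ := hg
    constructor
    · have hx : X (Sum.inl v) * fgen a b =
          X (Sum.inl a) * fgen (K := K) v b - X (Sum.inl b) * fgen v a := by
        simp only [fgen]; ring
      rw [hx]
      exact Ideal.sub_mem _ (Ideal.mul_mem_left _ _ (mem_beI hb))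
        (Ideal.mul_mem_left _ _ (mem_beI ha))
    · have hy : X (Sum.inr v) * fgen a b =
          X (Sum.inr a) * fgen (K := K) v b - X (Sum.inr b) * fgen v a := by
        simp only [fgen]; ring
      rw [hy]
      exact Ideal.sub_mem _ (Ideal.mul_mem_left _ _ (mem_beI hb))
        (Ideal.mul_mem_left _ _ (mem_beI ha))
  | zero => simp
  | add x y hx hy ihx ihy =>
    rw [mul_add, mul_add] at *
    exact ⟨Ideal.add_mem _ ihx.1 ihy.1, Ideal.add_mem _ ihx.2 ihy.2⟩
  | smul p x hx ih =>
    rw [smul_eq_mul, mul_left_comm, mul_left_comm (X (Sum.inr v))]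
    exact ⟨Ideal.mul_mem_left _ _ ih.1, Ideal.mul_mem_left _ _ ih.2⟩

lemma M_mul_mem {G : SimpleGraph V} {v : V} {q t : MvPolynomial (V ⊕ V) K}
    (hq : q ∈ Ideal.span {(X (Sum.inl v) : MvPolynomial (V ⊕ V) K), X (Sum.inr v)})
    (ht : t ∈ nbhdIdeal K G v) : q * t ∈ binomialEdgeIdeal K G := by
  obtain ⟨u, w, rfl⟩ := Ideal.mem_span_pair.mp hq
  have h := xy_mul_mem ht
  have : (u * X (Sum.inl v) + w * X (Sum.inr v)) * t =
      u * (X (Sum.inl v) * t) + w * (X (Sum.inr v) * t) := by ring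
  rw [this]
  exact Ideal.add_mem _ (Ideal.mul_mem_left _ _ h.1) (Ideal.mul_mem_left _ _ h.2)

/-- Any polynomial is congruent to its image under `pim v` modulo `(x_v, y_v)`. -/
lemma sub_pim_mem (v : V) (p : MvPolynomial (V ⊕ V) K) :
    p - pim v p ∈
      Ideal.span {(X (Sum.inl v) : MvPolynomial (V ⊕ V) K), X (Sum.inr v)} := by
  induction p using MvPolynomial.induction_on with
  | C a => simp
  | add p q hp hq =>
    have : p + q - pim v (p + q) = (p - pim v p) + (q - pim v q) := by
      rw [map_add]; ring
    rw [this]; exact Ideal.add_mem _ hp hq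
  | mul_X p n hp =>
    rw [map_mul, pim_X]
    by_cases h1 : n = Sum.inl v
    · subst h1
      have hgoal : p * X (Sum.inl v) ∈
          Ideal.span {(X (Sum.inl v) : MvPolynomial (V ⊕ V) K), X (Sum.inr v)} :=
        Ideal.mem_span_pair.mpr ⟨p, 0, by ring⟩
      simpa using hgoal
    · by_cases h2 : n = Sum.inr v
      · subst h2
        have hgoal : p * X (Sum.inr v) ∈
            Ideal.span {(X (Sum.inl v) : MvPolynomial (V ⊕ V) K), X (Sum.inr v)} :=
          Ideal.mem_span_pair.mpr ⟨0, p, by ring⟩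
        simpa [h1] using hgoal
      · rw [if_neg h1, if_neg h2]
        have : p * X n - pim v p * X n = (p - pim v p) * X n := by ring
        rw [this]
        exact Ideal.mul_mem_right _ _ hp

/-- `pim v` maps `nbhdIdeal` into itself, and the difference lies in `J_G`. -/
lemma nbhd_pim {G : SimpleGraph V} {v : V} {s : MvPolynomial (V ⊕ V) K}
    (hs : s ∈ nbhdIdeal K G v) :
    pim v s ∈ nbhdIdeal K G v ∧ s - pim v s ∈ binomialEdgeIdeal K G := by
  induction hs using Submodule.span_induction with
  | mem g hg =>
    obtain ⟨a, b, ha, hb, rfl⟩ := hg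
    rw [pim_fgen v ha.ne' hb.ne']
    exact ⟨Ideal.subset_span ⟨a, b, ha, hb, rfl⟩, by simp⟩
  | zero => simp
  | add x y hx hy ihx ihy =>
    refine ⟨by rw [map_add]; exact Ideal.add_mem _ ihx.1 ihy.1, ?_⟩
    have : x + y - pim v (x + y) = (x - pim v x) + (y - pim v y) := by
      rw [map_add]; ring
    rw [this]; exact Ideal.add_mem _ ihx.2 ihy.2
  | smul p x hx ih =>
    rw [smul_eq_mul]
    refine ⟨by rw [map_mul]; exact Ideal.mul_mem_left _ _ ih.1, ?_⟩
    have : p * x - pim v (p * x) =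
        p * (x - pim v x) + (p - pim v p) * pim v x := by
      rw [map_mul]; ring
    rw [this]
    exact Ideal.add_mem _ (Ideal.mul_mem_left _ _ ih.2)
      (M_mul_mem (sub_pim_mem v p) ih.1)

lemma pim_mem_beI {G : SimpleGraph V} {v : V} {s : MvPolynomial (V ⊕ V) K}
    (hs : s ∈ binomialEdgeIdeal K G) : pim v s ∈ binomialEdgeIdeal K G := by
  induction hs using Submodule.span_induction with
  | mem g hg =>
    obtain ⟨i, j, hij, rfl⟩ := hg
    rw [show (X (Sum.inl i) * X (Sum.inr j) - X (Sum.inl j) * X (Sum.inr i) :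
      MvPolynomial (V ⊕ V) K) = fgen i j from rfl]
    by_cases hi : i = v
    · have h0 : pim (K := K) v (fgen i j) = 0 := by simp [fgen, hi]
      rw [h0]; exact Ideal.zero_mem _
    · by_cases hj : j = v
      · have h0 : pim (K := K) v (fgen i j) = 0 := by simp [fgen, hj]
        rw [h0]; exact Ideal.zero_mem _
      · rw [pim_fgen (K := K) v hi hj]; exact mem_beI hij
  | zero => simp
  | add x y hx hy ihx ihy => rw [map_add]; exact Ideal.add_mem _ ihx ihy
  | smul p x hx ih =>
    rw [smul_eq_mul, map_mul]; exact Ideal.mul_mem_left _ _ ih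

lemma pim_mem_beI0 {G : SimpleGraph V} {v : V} {s : MvPolynomial (V ⊕ V) K}
    (hs : s ∈ binomialEdgeIdeal K (inducedOn G {u | u ≠ v})) :
    pim v s ∈ binomialEdgeIdeal K (inducedOn G {u | u ≠ v}) := by
  induction hs using Submodule.span_induction with
  | mem g hg =>
    obtain ⟨i, j, hij, rfl⟩ := hg
    obtain ⟨hadj, hi, hj⟩ := hij
    rw [show (X (Sum.inl i) * X (Sum.inr j) - X (Sum.inl j) * X (Sum.inr i) :
      MvPolynomial (V ⊕ V) K) = fgen i j from rfl, pim_fgen (K := K) v hi hj]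
    exact mem_beI ⟨hadj, hi, hj⟩
  | zero => simp
  | add x y hx hy ihx ihy => rw [map_add]; exact Ideal.add_mem _ ihx ihy
  | smul p x hx ih =>
    rw [smul_eq_mul, map_mul]; exact Ideal.mul_mem_left _ _ ih

lemma pim_mem_M {v : V} {s : MvPolynomial (V ⊕ V) K}
    (hs : s ∈ Ideal.span {(X (Sum.inl v) : MvPolynomial (V ⊕ V) K), X (Sum.inr v)}) :
    pim v s = 0 := by
  obtain ⟨u, w, rfl⟩ := Ideal.mem_span_pair.mp hs
  simp

end OhtaniAux
end

open OhtaniAux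

/-- Ohtani's lemma. If `v` is not a simplicial vertex of `G`
(its neighborhood is not a clique), then
`J_G = (J_{G∖v} + (x_v, y_v)) ∩ J_{G_v}`. -/
theorem ohtani_lemma {K : Type} [Field K] {V : Type} [Fintype V] [DecidableEq V]
    (G : SimpleGraph V) (v : V)
    (hv : ¬ G.IsClique (G.neighborSet v)) :
    binomialEdgeIdeal K G =
      (binomialEdgeIdeal K (inducedOn G {u | u ≠ v}) +
          Ideal.span {(X (Sum.inl v) : MvPolynomial (V ⊕ V) K), X (Sum.inr v)}) ⊓
        binomialEdgeIdeal K (gvGraph G v) := by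
  set J := binomialEdgeIdeal K G with hJ
  set J0 := binomialEdgeIdeal K (inducedOn G {u | u ≠ v}) with hJ0
  set M : Ideal (MvPolynomial (V ⊕ V) K) :=
    Ideal.span {(X (Sum.inl v) : MvPolynomial (V ⊕ V) K), X (Sum.inr v)} with hM
  set Jv := binomialEdgeIdeal K (gvGraph G v) with hJv
  have hJ0J : J0 ≤ J := beI_mono fun i j h => h.1
  apply le_antisymm
  · apply le_inf
    · -- J ≤ J0 + M
      rw [hJ, binomialEdgeIdeal, Ideal.span_le]
      rintro f ⟨i, j, hij, rfl⟩
      by_cases hi : i = v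
      · subst hi
        refine Ideal.mem_sup_right (Ideal.mem_span_pair.mpr
          ⟨X (Sum.inr j), -(X (Sum.inl j)), by ring⟩)
      · by_cases hj : j = v
        · subst hj
          refine Ideal.mem_sup_right (Ideal.mem_span_pair.mpr
            ⟨-(X (Sum.inr i)), X (Sum.inl i), by ring⟩)
        · exact Ideal.mem_sup_left (mem_beI ⟨hij, hi, hj⟩)
    · exact beI_mono fun i j h => ⟨h.ne, Or.inl h⟩
  · rintro f ⟨hfA, hfB⟩
    -- Jv ≤ J ⊔ nbhdIdeal
    have hsplit : Jv ≤ J ⊔ nbhdIdeal K G v := by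
      rw [hJv, binomialEdgeIdeal, Ideal.span_le]
      rintro g ⟨i, j, ⟨hne, hadj | ⟨ha, hb⟩⟩, rfl⟩
      · exact Ideal.mem_sup_left (mem_beI hadj)
      · exact Ideal.mem_sup_right (Ideal.subset_span ⟨i, j, ha, hb, rfl⟩)
    obtain ⟨g, hg, h, hh, rfl⟩ := Submodule.mem_sup.mp (hsplit hfB)
    -- the projection of f lies in J0 hence in J
    have hpimf : pim v (g + h) ∈ J := by
      obtain ⟨j0, hj0, m, hm, heq⟩ := Submodule.mem_sup.mp hfA
      rw [← heq, map_add, pim_mem_M hm, add_zero]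
      exact hJ0J (pim_mem_beI0 hj0)
    have key : g + h = (g - pim v g) + (h - pim v h) + pim v (g + h) := by
      rw [map_add]; ring
    rw [key]
    exact Ideal.add_mem _ (Ideal.add_mem _
      (Ideal.sub_mem _ hg (pim_mem_beI hg)) (nbhd_pim hh).2) hpimf
end
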